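/- arXiv:2411.15385 — 3 statements merged into one kernel-verified Lean document; each statement's English description precedes it below -/
import Mathlib

section
/- Let Q be a k×k positive semidefinite real matrix with all diagonal entries equal to 1. Then the maximum over rows i of the squared row norm ∑_j Q_{ij}² is at most 2k^{-1/2} times the squared Frobenius norm ∑_{i,j} Q_{ij}². -/
open Finset Matrix

/-- Cauchy–Schwarz for the bilinear form of a real PSD matrix. -/
lemma psd_cauchy_schwarz {k : ℕ} (Q : Matrix (Fin k) (Fin k) ℝ) (hQ : Q.PosSemidef)
    (x y : Fin k → ℝ) :
    (x ⬝ᵥ Q *ᵥ y) ^ 2 ≤ (x ⬝ᵥ Q *ᵥ x) * (y ⬝ᵥ Q *ᵥ y) := by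
  have hsym : Qᵀ = Q := by
    have := hQ.1
    rwa [Matrix.IsHermitian, Matrix.conjTranspose_eq_transpose_of_trivial] at this
  have hswap : ∀ u v : Fin k → ℝ, u ⬝ᵥ Q *ᵥ v = v ⬝ᵥ Q *ᵥ u := by
    intro u v
    simp only [dotProduct, Matrix.mulVec, Finset.mul_sum]
    rw [Finset.sum_comm]
    refine Finset.sum_congr rfl fun j _ => Finset.sum_congr rfl fun l _ => ?_
    have : Q l j = Q j l := by
      nth_rewrite 1 [← hsym]
      rw [Matrix.transpose_apply]
    rw [this]; ring
  have hpos : ∀ z : Fin k → ℝ, 0 ≤ z ⬝ᵥ Q *ᵥ z := by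
    intro z
    simpa using hQ.dotProduct_mulVec_nonneg z
  set a := y ⬝ᵥ Q *ᵥ y
  set b := x ⬝ᵥ Q *ᵥ y
  set c := x ⬝ᵥ Q *ᵥ x
  have key : ∀ t : ℝ, 0 ≤ a * (t * t) + (2 * b) * t + c := by
    intro t
    have h := hpos (x + t • y)
    have hexp : (x + t • y) ⬝ᵥ Q *ᵥ (x + t • y) = a * (t * t) + (2 * b) * t + c := by
      rw [Matrix.mulVec_add, dotProduct_add, add_dotProduct,
        add_dotProduct, Matrix.mulVec_smul, dotProduct_smul,
        smul_dotProduct, smul_dotProduct, dotProduct_smul]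
      have := hswap y x
      simp only [smul_eq_mul]
      rw [this]
      ring
    rw [hexp] at h
    exact h
  have hd := discrim_le_zero key
  rw [discrim] at hd
  nlinarith [hd]

/-- For a k×k PSD matrix with unit diagonal, every squared row norm is at most
`2 k^{-1/2}` times the squared Frobenius norm. -/
theorem psd_row_norm_le_unit_diag (k : ℕ) (hk : 0 < k)
    (Q : Matrix (Fin k) (Fin k) ℝ) (hQ : Q.PosSemidef) (hdiag : ∀ i, Q i i = 1) :
    ∀ i, ∑ j, (Q i j) ^ 2 ≤ 2 / Real.sqrt k * ∑ i, ∑ j, (Q i j) ^ 2 := by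
  intro i
  set r : ℝ := ∑ j, (Q i j) ^ 2 with hr
  set F : ℝ := ∑ i, ∑ j, (Q i j) ^ 2 with hF
  -- each row norm is at least 1
  have hrow_ge : ∀ i' : Fin k, (1:ℝ) ≤ ∑ j, (Q i' j) ^ 2 := by
    intro i'
    calc (1:ℝ) = (Q i' i') ^ 2 := by rw [hdiag i']; norm_num
    _ ≤ ∑ j, (Q i' j) ^ 2 :=
      Finset.single_le_sum (f := fun j => Q i' j ^ 2) (fun j _ => sq_nonneg _) (Finset.mem_univ i')
  have hr1 : (1:ℝ) ≤ r := hrow_ge i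
  have hkF : (k:ℝ) ≤ F := by
    calc (k:ℝ) = ∑ _i : Fin k, (1:ℝ) := by simp
    _ ≤ F := Finset.sum_le_sum fun i' _ => hrow_ge i'
  have hF0 : (0:ℝ) < F := lt_of_lt_of_le (by exact_mod_cast hk) hkF
  -- the row vector
  set x : Fin k → ℝ := fun j => Q i j with hx
  set e : Fin k → ℝ := Pi.single i 1 with he
  have h1 : e ⬝ᵥ Q *ᵥ x = r := by
    rw [he, single_dotProduct]
    simp only [Matrix.mulVec, dotProduct, hx, hr, one_mul]
    exact Finset.sum_congr rfl fun j _ => by ring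
  have h2 : e ⬝ᵥ Q *ᵥ e = 1 := by
    rw [he, single_dotProduct, one_mul]
    simp [Matrix.mulVec, dotProduct, Pi.single_apply, hdiag i]
  -- bound the quadratic form of x by Cauchy–Schwarz on sums
  have h3 : x ⬝ᵥ Q *ᵥ x ≤ Real.sqrt F * r := by
    have hexp : x ⬝ᵥ Q *ᵥ x = ∑ p : Fin k × Fin k, Q p.1 p.2 * (x p.1 * x p.2) := by
      rw [Fintype.sum_prod_type]
      simp only [dotProduct, Matrix.mulVec, Finset.mul_sum]
      exact Finset.sum_congr rfl fun j _ => Finset.sum_congr rfl fun l _ => by ring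
    have hcs := Finset.sum_mul_sq_le_sq_mul_sq Finset.univ
      (fun p : Fin k × Fin k => Q p.1 p.2) (fun p => x p.1 * x p.2)
    have hQsq : ∑ p : Fin k × Fin k, (Q p.1 p.2) ^ 2 = F := by
      rw [hF, Fintype.sum_prod_type]
    have hxsq : ∑ p : Fin k × Fin k, (x p.1 * x p.2) ^ 2 = r ^ 2 := by
      rw [Fintype.sum_prod_type]
      simp only [mul_pow]
      rw [← Finset.sum_mul_sum]
      rw [hr, sq]
    rw [hQsq, hxsq] at hcs
    have hnn : 0 ≤ x ⬝ᵥ Q *ᵥ x := by simpa using hQ.dotProduct_mulVec_nonneg x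
    have hsq : (x ⬝ᵥ Q *ᵥ x) ^ 2 ≤ F * r ^ 2 := by rw [hexp]; exact hcs
    have : x ⬝ᵥ Q *ᵥ x = Real.sqrt ((x ⬝ᵥ Q *ᵥ x) ^ 2) := by
      rw [Real.sqrt_sq hnn]
    rw [this]
    calc Real.sqrt ((x ⬝ᵥ Q *ᵥ x) ^ 2) ≤ Real.sqrt (F * r ^ 2) := Real.sqrt_le_sqrt hsq
    _ = Real.sqrt F * r := by
      rw [Real.sqrt_mul hF0.le, Real.sqrt_sq (by linarith)]
  -- Cauchy–Schwarz for the PSD form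
  have hcs2 := psd_cauchy_schwarz Q hQ e x
  rw [h1, h2, one_mul] at hcs2
  have hr_le : r ≤ Real.sqrt F := by
    have : r ^ 2 ≤ Real.sqrt F * r := le_trans hcs2 h3
    nlinarith
  -- finish: √F ≤ 2/√k * F
  have hk0 : (0:ℝ) < Real.sqrt k := Real.sqrt_pos.mpr (by exact_mod_cast hk)
  have hkF' : Real.sqrt k ≤ Real.sqrt F := Real.sqrt_le_sqrt hkF
  have hFF : Real.sqrt F * Real.sqrt F = F := Real.mul_self_sqrt hF0.le
  have hfin : Real.sqrt F ≤ 2 / Real.sqrt k * F := by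
    rw [div_mul_eq_mul_div, le_div_iff₀ hk0]
    nlinarith
  exact le_trans hr_le hfin
end

section
/- Let Q be a k×k positive semidefinite real matrix whose diagonal entries satisfy q_min² ≤ Q_{ii} ≤ q_max² for constants 0 < q_min ≤ q_max. Then max_i ∑_j Q_{ij}² ≤ 2 (q_max²/q_min²) k^{-1/2} ∑_{i,j} Q_{ij}². -/
open Finset

/-- For a k×k PSD matrix with diagonal entries between `qmin²` and `qmax²`, every squared
row norm is at most `2 (qmax²/qmin²) k^{-1/2}` times the squared Frobenius norm. -/
theorem psd_row_norm_le_balanced_diag (k : ℕ) (hk : 0 < k)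
    (Q : Matrix (Fin k) (Fin k) ℝ) (hQ : Q.PosSemidef)
    (qmin qmax : ℝ) (hqmin : 0 < qmin) (hq : qmin ≤ qmax)
    (hdiag : ∀ i, qmin ^ 2 ≤ Q i i ∧ Q i i ≤ qmax ^ 2) :
    ∀ i, ∑ j, (Q i j) ^ 2 ≤
      2 * (qmax ^ 2 / qmin ^ 2) / Real.sqrt k * ∑ i, ∑ j, (Q i j) ^ 2 := by
  intro i
  obtain ⟨B, hB⟩ : ∃ B : Matrix (Fin k) (Fin k) ℝ, Q = B.conjTranspose * B := by
    open scoped MatrixOrder in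
    obtain ⟨B, hB⟩ := CStarAlgebra.nonneg_iff_eq_star_mul_self.mp hQ.nonneg
    exact ⟨B, hB⟩
  have hent : ∀ a b, Q a b = ∑ m, B m a * B m b := by
    intro a b
    rw [hB]
    simp [Matrix.mul_apply, Matrix.conjTranspose_apply]
  have hsym : ∀ a b, Q a b = Q b a := by
    intro a b; rw [hent, hent]; exact Finset.sum_congr rfl fun m _ => mul_comm _ _
  set A : ℝ := ∑ j, (Q i j) ^ 2 with hAdef
  set S : ℝ := ∑ i, ∑ j, (Q i j) ^ 2 with hSdef
  set T : ℝ := ∑ j, ∑ l, (Q i j * Q l i) * Q j l with hTdef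
  set v : Fin k → ℝ := fun m => ∑ j, B m j * Q j i with hvdef
  have hA0 : 0 ≤ A := Finset.sum_nonneg fun j _ => sq_nonneg _
  have hS0 : 0 ≤ S := Finset.sum_nonneg fun a _ => Finset.sum_nonneg fun j _ => sq_nonneg _
  -- A = ∑ m, B m i * v m
  have hA : A = ∑ m, B m i * v m := by
    rw [hAdef, hvdef]
    simp only [Finset.mul_sum]
    rw [Finset.sum_comm]
    refine Finset.sum_congr rfl fun j _ => ?_
    have h : Q i j ^ 2 = (∑ m, B m i * B m j) * Q j i := by
      rw [← hent i j, hsym j i, sq]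
    rw [h, Finset.sum_mul]
    exact Finset.sum_congr rfl fun m _ => by ring
  -- ∑ m, v m ^ 2 = T
  have hv : ∑ m, (v m) ^ 2 = T := by
    rw [hTdef, hvdef]
    simp only [sq, Finset.sum_mul_sum]
    rw [Finset.sum_comm]
    refine Finset.sum_congr rfl fun j _ => ?_
    rw [Finset.sum_comm]
    refine Finset.sum_congr rfl fun l _ => ?_
    rw [hent j l, Finset.mul_sum]
    refine Finset.sum_congr rfl fun m _ => ?_
    rw [hsym j i]
    ring
  -- Step 1 : A² ≤ Q i i * T
  have hstep1 : A ^ 2 ≤ Q i i * T := by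
    calc A ^ 2 = (∑ m, B m i * v m) ^ 2 := by rw [hA]
      _ ≤ (∑ m, (B m i) ^ 2) * (∑ m, (v m) ^ 2) :=
          Finset.sum_mul_sq_le_sq_mul_sq Finset.univ _ _
      _ = Q i i * T := by
          rw [hv]; congr 1; rw [hent i i]; exact Finset.sum_congr rfl fun m _ => sq (B m i)
  -- Step 2 : T ≤ A * √S
  have hT : T = ∑ p : Fin k × Fin k, (Q i p.1 * Q p.2 i) * Q p.1 p.2 := by
    rw [Fintype.sum_prod_type]
  have h1 : ∑ p : Fin k × Fin k, (Q i p.1 * Q p.2 i) ^ 2 = A * A := by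
    rw [Fintype.sum_prod_type]
    simp only [mul_pow]
    rw [← Finset.sum_mul_sum]
    congr 1
    exact Finset.sum_congr rfl fun l _ => by rw [hsym l i]
  have h2 : ∑ p : Fin k × Fin k, (Q p.1 p.2) ^ 2 = S := by
    rw [Fintype.sum_prod_type]
  have hT2 : T ^ 2 ≤ A ^ 2 * S := by
    have := Finset.sum_mul_sq_le_sq_mul_sq Finset.univ
      (fun p : Fin k × Fin k => Q i p.1 * Q p.2 i) (fun p => Q p.1 p.2)
    rw [h1, h2, ← hT] at this
    calc T ^ 2 ≤ A * A * S := this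
      _ = A ^ 2 * S := by ring
  have hTle : T ≤ A * Real.sqrt S := by
    calc T ≤ |T| := le_abs_self T
      _ = Real.sqrt (T ^ 2) := (Real.sqrt_sq_eq_abs T).symm
      _ ≤ Real.sqrt (A ^ 2 * S) := Real.sqrt_le_sqrt hT2
      _ = A * Real.sqrt S := by
          rw [Real.sqrt_mul (sq_nonneg A), Real.sqrt_sq hA0]
  -- A > 0
  have hApos : 0 < A := by
    have h1 : Q i i ^ 2 ≤ A :=
      Finset.single_le_sum (f := fun j => Q i j ^ 2) (fun j _ => sq_nonneg _) (Finset.mem_univ i)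
    have h2 : (qmin ^ 2) ^ 2 ≤ Q i i ^ 2 :=
      pow_le_pow_left₀ (sq_nonneg qmin) (hdiag i).1 2
    have : (0:ℝ) < (qmin ^ 2) ^ 2 := by positivity
    linarith
  -- A ≤ qmax² √S
  have hQii0 : (0:ℝ) ≤ Q i i := le_trans (sq_nonneg qmin) (hdiag i).1
  have hsS0 : (0:ℝ) ≤ Real.sqrt S := Real.sqrt_nonneg S
  have hAle : A ≤ qmax ^ 2 * Real.sqrt S := by
    have e1 : A ^ 2 ≤ Q i i * (A * Real.sqrt S) :=
      le_trans hstep1 (mul_le_mul_of_nonneg_left hTle hQii0)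
    have e2 : Q i i * (A * Real.sqrt S) ≤ qmax ^ 2 * (A * Real.sqrt S) :=
      mul_le_mul_of_nonneg_right (hdiag i).2 (mul_nonneg hA0 hsS0)
    nlinarith [hApos]
  -- S ≥ k qmin⁴, so √S ≥ √k qmin²
  have hS : (k : ℝ) * (qmin ^ 2) ^ 2 ≤ S := by
    calc (k : ℝ) * (qmin ^ 2) ^ 2 = ∑ _a : Fin k, (qmin ^ 2) ^ 2 := by
          simp [Finset.sum_const, mul_comm]
      _ ≤ ∑ a, (Q a a) ^ 2 :=
          Finset.sum_le_sum fun a _ => pow_le_pow_left₀ (sq_nonneg qmin) (hdiag a).1 2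
      _ ≤ S := Finset.sum_le_sum fun a _ =>
          Finset.single_le_sum (f := fun j => Q a j ^ 2) (fun j _ => sq_nonneg _)
            (Finset.mem_univ a)
  have hsS : Real.sqrt k * qmin ^ 2 ≤ Real.sqrt S := by
    have h : Real.sqrt ((k : ℝ) * (qmin ^ 2) ^ 2) = Real.sqrt k * qmin ^ 2 := by
      rw [Real.sqrt_mul (Nat.cast_nonneg k), Real.sqrt_sq (sq_nonneg qmin)]
    rw [← h]; exact Real.sqrt_le_sqrt hS
  have hk0 : (0:ℝ) < Real.sqrt k := Real.sqrt_pos.mpr (by exact_mod_cast hk)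
  have hSsq : Real.sqrt S ^ 2 = S := Real.sq_sqrt hS0
  have hc : qmax ^ 2 / qmin ^ 2 * qmin ^ 2 = qmax ^ 2 := by
    field_simp
  rw [div_mul_eq_mul_div, le_div_iff₀ hk0]
  -- goal : A * √k ≤ 2 * (qmax²/qmin²) * S
  set c : ℝ := qmax ^ 2 / qmin ^ 2 with hcdef
  have hc0 : 0 ≤ c := by positivity
  have e1 : A * Real.sqrt k ≤ qmax ^ 2 * Real.sqrt S * Real.sqrt k :=
    mul_le_mul_of_nonneg_right hAle hk0.le
  have e2 : qmax ^ 2 * Real.sqrt S * Real.sqrt k = c * Real.sqrt S * (Real.sqrt k * qmin ^ 2) := by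
    rw [← hc]; ring
  have e3 : c * Real.sqrt S * (Real.sqrt k * qmin ^ 2) ≤ c * Real.sqrt S * Real.sqrt S :=
    mul_le_mul_of_nonneg_left hsS (mul_nonneg hc0 hsS0)
  have e4 : c * Real.sqrt S * Real.sqrt S = c * S := by
    rw [mul_assoc, Real.mul_self_sqrt hS0]
  have e5 : c * S ≤ 2 * c * S := by nlinarith [mul_nonneg hc0 hS0]
  linarith
end

section
/- Let w_1, …, w_k ∈ ℝ^d be unit vectors with |⟨w_i, w_j⟩| ≤ 1 − (log k)/√k for all i ≠ j, let λ ∈ ℝ^k and c, ĉ ∈ {±1/√k}^k. Then for any integer s ≥ ⌈(3/2)√k⌉, |∑_{i≠j} λ_i λ_j c_i ĉ_j ⟨w_i, w_j⟩^s| ≤ (1 − (log k)/√k)^s ‖λ‖₂² ≤ ‖λ‖₂² / k^{3/2} for k large enough. -/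
open Finset

lemma aux_log_le_sqrt (x : ℝ) (hx : 1 ≤ x) : Real.log x ≤ Real.sqrt x := by
  set t := Real.sqrt (Real.sqrt x) with ht
  have hx0 : (0:ℝ) ≤ x := by linarith
  have hs0 : (0:ℝ) ≤ Real.sqrt x := Real.sqrt_nonneg x
  have ht0 : (0:ℝ) < t := Real.sqrt_pos.2 (by positivity)
  have h1 : t ^ 2 = Real.sqrt x := Real.sq_sqrt hs0
  have h2 : Real.sqrt x ^ 2 = x := Real.sq_sqrt hx0
  have h3 : Real.log x = 4 * Real.log t := by
    have : x = t ^ 4 := by nlinarith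
    rw [this, Real.log_pow]; push_cast; ring
  have h4 : Real.log t ≤ t - 1 := Real.log_le_sub_one_of_pos ht0
  nlinarith [sq_nonneg (t - 2)]

/-- Under angular separation `|⟨wᵢ,wⱼ⟩| ≤ 1 − (log k)/√k`, for `s ≥ (3/2)√k` the
off-diagonal randomized sum is bounded by `(1 − (log k)/√k)^s ‖λ‖₂²`, which for
large enough `k` is at most `‖λ‖₂²/k^{3/2}`. -/
theorem offdiagonal_sum_decay :
    ∃ K : ℕ, ∀ k : ℕ, K ≤ k → ∀ d : ℕ,
      ∀ w : Fin k → EuclideanSpace ℝ (Fin d), (∀ i, ‖w i‖ = 1) →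
      (∀ i j, i ≠ j → |(inner ℝ (w i) (w j) : ℝ)| ≤ 1 - Real.log k / Real.sqrt k) →
      ∀ lam c chat : Fin k → ℝ,
      (∀ i, c i = 1 / Real.sqrt k ∨ c i = -(1 / Real.sqrt k)) →
      (∀ i, chat i = 1 / Real.sqrt k ∨ chat i = -(1 / Real.sqrt k)) →
      ∀ s : ℕ, (3 / 2 : ℝ) * Real.sqrt k ≤ s →
      |∑ i, ∑ j ∈ Finset.univ.erase i,
          lam i * lam j * c i * chat j * (inner ℝ (w i) (w j) : ℝ) ^ s|
          ≤ (1 - Real.log k / Real.sqrt k) ^ s * ∑ i, lam i ^ 2 ∧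
      (1 - Real.log k / Real.sqrt k) ^ s * ∑ i, lam i ^ 2
          ≤ (∑ i, lam i ^ 2) / (k : ℝ) ^ ((3 : ℝ) / 2) := by
  refine ⟨1, ?_⟩
  intro k hk d w hw hsep lam c chat hc hchat s hs
  have hk1 : (1:ℝ) ≤ k := by exact_mod_cast hk
  have hk0 : (0:ℝ) < k := by linarith
  have hsq0 : (0:ℝ) < Real.sqrt k := Real.sqrt_pos.2 hk0
  have hlog0 : 0 ≤ Real.log k := Real.log_nonneg hk1
  set t : ℝ := Real.log k / Real.sqrt k with htdef
  have ht0 : 0 ≤ t := by positivity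
  have ht1 : t ≤ 1 := by
    rw [htdef, div_le_one hsq0]
    exact aux_log_le_sqrt _ hk1
  have hrho0 : (0:ℝ) ≤ 1 - t := by linarith
  have hcabs : ∀ i, |c i| = 1 / Real.sqrt k := by
    intro i; rcases hc i with h | h <;> rw [h] <;> simp [abs_of_nonneg, le_of_lt hsq0]
  have hchatabs : ∀ i, |chat i| = 1 / Real.sqrt k := by
    intro i; rcases hchat i with h | h <;> rw [h] <;> simp [abs_of_nonneg, le_of_lt hsq0]
  have hS0 : (0:ℝ) ≤ ∑ i, lam i ^ 2 := Finset.sum_nonneg fun i _ => sq_nonneg _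
  constructor
  · -- first inequality
    calc |∑ i, ∑ j ∈ Finset.univ.erase i,
          lam i * lam j * c i * chat j * (inner ℝ (w i) (w j) : ℝ) ^ s|
        ≤ ∑ i, ∑ j ∈ Finset.univ.erase i,
          |lam i * lam j * c i * chat j * (inner ℝ (w i) (w j) : ℝ) ^ s| := by
          refine (Finset.abs_sum_le_sum_abs _ _).trans ?_
          exact Finset.sum_le_sum fun i _ => Finset.abs_sum_le_sum_abs _ _
      _ ≤ ∑ i, ∑ j ∈ Finset.univ.erase i,
          |lam i| * |lam j| * (1 / k) * (1 - t) ^ s := by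
          refine Finset.sum_le_sum fun i _ => Finset.sum_le_sum fun j hj => ?_
          have hij : j ≠ i := Finset.ne_of_mem_erase hj
          have h1 : |(inner ℝ (w i) (w j) : ℝ)| ≤ 1 - t := hsep i j (Ne.symm hij)
          have h2 : |(inner ℝ (w i) (w j) : ℝ) ^ s| ≤ (1 - t) ^ s := by
            rw [abs_pow]; exact pow_le_pow_left₀ (abs_nonneg _) h1 s
          rw [abs_mul, abs_mul, abs_mul, abs_mul, hcabs, hchatabs]
          have hkk : (1 / Real.sqrt k) * (1 / Real.sqrt k) = 1 / k := by
            rw [div_mul_div_comm, one_mul, Real.mul_self_sqrt (le_of_lt hk0)]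
          calc |lam i| * |lam j| * (1 / Real.sqrt k) * (1 / Real.sqrt k) *
                |(inner ℝ (w i) (w j) : ℝ) ^ s|
              ≤ |lam i| * |lam j| * (1 / Real.sqrt k) * (1 / Real.sqrt k) * (1 - t) ^ s := by
                apply mul_le_mul_of_nonneg_left h2; positivity
            _ = |lam i| * |lam j| * (1 / k) * (1 - t) ^ s := by
                rw [mul_assoc (|lam i| * |lam j|), hkk]
      _ ≤ ∑ i, ∑ j, |lam i| * |lam j| * (1 / k) * (1 - t) ^ s := by
          refine Finset.sum_le_sum fun i _ => ?_
          refine Finset.sum_le_sum_of_subset_of_nonneg (Finset.erase_subset _ _)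
            fun j _ _ => by positivity
      _ = (∑ i, |lam i|) ^ 2 * (1 / k) * (1 - t) ^ s := by
          rw [sq, Finset.sum_mul_sum, Finset.sum_mul, Finset.sum_mul]
          exact Finset.sum_congr rfl fun i _ => by
            rw [Finset.sum_mul, Finset.sum_mul]
      _ ≤ (k * ∑ i, lam i ^ 2) * (1 / k) * (1 - t) ^ s := by
          have h := sq_sum_le_card_mul_sum_sq (s := (Finset.univ : Finset (Fin k)))
            (f := fun i => |lam i|)
          simp only [Finset.card_univ, Fintype.card_fin, sq_abs] at h
          have : (∑ i, |lam i|) ^ 2 ≤ (k : ℝ) * ∑ i, lam i ^ 2 := h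
          apply mul_le_mul_of_nonneg_right (mul_le_mul_of_nonneg_right this (by positivity))
          positivity
      _ = (1 - t) ^ s * ∑ i, lam i ^ 2 := by field_simp
  · -- second inequality
    have hpow : (1 - t) ^ s ≤ ((k : ℝ) ^ ((3:ℝ)/2))⁻¹ := by
      have h1 : (1 - t) ^ s ≤ Real.exp (-t) ^ s := by
        apply pow_le_pow_left₀ hrho0
        linarith [Real.add_one_le_exp (-t)]
      have h2 : Real.exp (-t) ^ s = Real.exp (-(s * t)) := by
        rw [← Real.exp_nat_mul]; ring_nf
      have h3 : Real.exp (-(s * t)) ≤ Real.exp (-(3/2 * Real.log k)) := by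
        apply Real.exp_le_exp.2
        have : (3/2 : ℝ) * Real.log k ≤ s * t := by
          rw [htdef]
          have : (3/2 : ℝ) * Real.sqrt k * (Real.log k / Real.sqrt k) ≤
              s * (Real.log k / Real.sqrt k) := by
            apply mul_le_mul_of_nonneg_right hs (by positivity)
          calc (3/2 : ℝ) * Real.log k
              = 3/2 * Real.sqrt k * (Real.log k / Real.sqrt k) := by
                field_simp
            _ ≤ s * (Real.log k / Real.sqrt k) := this
        linarith
      have h4 : Real.exp (-(3/2 * Real.log k)) = ((k : ℝ) ^ ((3:ℝ)/2))⁻¹ := by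
        rw [Real.rpow_def_of_pos hk0, ← Real.exp_neg]
        ring_nf
      rw [← h4]
      rw [h2] at h1
      exact h1.trans h3
    calc (1 - t) ^ s * ∑ i, lam i ^ 2
        ≤ ((k : ℝ) ^ ((3:ℝ)/2))⁻¹ * ∑ i, lam i ^ 2 :=
          mul_le_mul_of_nonneg_right hpow hS0
      _ = (∑ i, lam i ^ 2) / (k : ℝ) ^ ((3 : ℝ) / 2) := (div_eq_inv_mul _ _).symm
end
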